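/- Let d ≥ 1. For every subset J ⊆ {0, 1, …, d−2}, let F_J = {s ∈ C_d : s_j = s_{j+1} for all j ∈ J}, with the convention s_0 = 0 (the sets F_J are exactly the faces of the cone C_d). Then ξ^d_1(F_J) = F_J; that is, ξ^d_1 maps every face of C_d onto itself. -/

import Mathlib

noncomputable section

open scoped BigOperators

open Classical in
/-- The absolute value `|y| = q^{deg y}` (and `|0| = 0`) on `A = F_q[T]`. -/
def absA (Fq : Type) [Field Fq] [Fintype Fq] (y : Polynomial Fq) : ℝ :=
  if y = 0 then 0 else (Fintype.card Fq : ℝ) ^ y.natDegree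

/-- `ε^{r,n}_s(x) = x + Σ_{y ∈ A^n, y ≠ 0} max(x − max_{1≤i≤n} |y_i|^r·s_i, 0)`.
(For each `x` only finitely many summands are nonzero, so the `tsum` agrees with the
intended sum; the inner `⨆` over the finite type `Fin n` is the maximum.) -/
def epsFun (Fq : Type) [Field Fq] [Fintype Fq] (r n : ℕ) (s : Fin n → ℝ) (x : ℝ) : ℝ :=
  x + ∑' y : {y : Fin n → Polynomial Fq // y ≠ 0},
      max (x - ⨆ i : Fin n, (absA Fq (y.1 i)) ^ r * s i) 0

/-- `δ^{r,n}(s) = ((q−1)/(q^{r+n}−1))·Σ_{i=1}^n q^{n−i}·ε^{r,i−1}_{(s_1,…,s_{i−1})}(s_i)`. -/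
def deltaFun (Fq : Type) [Field Fq] [Fintype Fq] (r n : ℕ) (s : Fin n → ℝ) : ℝ :=
  ((Fintype.card Fq : ℝ) - 1) / ((Fintype.card Fq : ℝ) ^ (r + n) - 1) *
    ∑ i : Fin n, (Fintype.card Fq : ℝ) ^ (n - 1 - (i : ℕ)) *
      epsFun Fq r i (fun j : Fin (i : ℕ) => s (Fin.castLE i.isLt.le j)) (s i)

/-- `ε̂^{r,n}_s(x) = ε^{r,n}_s(x) − δ^{r,n}(s)`. -/
def epsHat (Fq : Type) [Field Fq] [Fintype Fq] (r n : ℕ) (s : Fin n → ℝ) (x : ℝ) : ℝ :=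
  epsFun Fq r n s x - deltaFun Fq r n s

/-- The cone `C_d = {(s_1,…,s_{d−1}) ∈ ℝ^{d−1} : 0 ≤ s_1 ≤ … ≤ s_{d−1}}`. -/
def Cd (d : ℕ) : Set (Fin (d - 1) → ℝ) :=
  {s | (∀ i, 0 ≤ s i) ∧ Monotone s}

open Classical in
/-- The map `ξ^d_k : C_d → ℝ^{d−1}`: with `r = r(s)` the least (1-based) index with
`s_r ≠ 0`, it is given by `ξ^d_k(s)_i = 0` for `i < r` and
`ξ^d_k(s)_i = ε^{r,d−r}_{(s_r^r,…,s_{d−1}^r)}(q^{−kr}·s_i^r)` for `r ≤ i ≤ d−1`. -/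
def xiFun (Fq : Type) [Field Fq] [Fintype Fq] (d k : ℕ)
    (s : Fin (d - 1) → ℝ) : Fin (d - 1) → ℝ := fun i =>
  if hz : ∃ j : Fin (d - 1), s j ≠ 0 then
    let j0 : Fin (d - 1) := (Finset.univ.filter (fun j : Fin (d - 1) => s j ≠ 0)).min'
      (by obtain ⟨j, hj⟩ := hz
          exact ⟨j, Finset.mem_filter.mpr ⟨Finset.mem_univ j, hj⟩⟩)
    if (i : ℕ) < (j0 : ℕ) then 0
    else
      epsFun Fq ((j0 : ℕ) + 1) (d - 1 - (j0 : ℕ))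
        (fun t : Fin (d - 1 - (j0 : ℕ)) =>
          (s ⟨(j0 : ℕ) + (t : ℕ), by have := t.isLt; have := j0.isLt; omega⟩) ^ ((j0 : ℕ) + 1))
        (((Fintype.card Fq : ℝ) ^ (k * ((j0 : ℕ) + 1)))⁻¹ * (s i) ^ ((j0 : ℕ) + 1))
  else 0

/-- The 1-based coordinates `s_1, …, s_{d−1}` of `s`, extended by the convention
`s_0 = 0` (and `0` outside the range). -/
def padSeq (d : ℕ) (s : Fin (d - 1) → ℝ) (j : ℕ) : ℝ :=
  if h : 1 ≤ j ∧ j ≤ d - 1 then s ⟨j - 1, by omega⟩ else 0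

/-- The face `F_J = {s ∈ C_d : s_j = s_{j+1} for all j ∈ J}` of `C_d`, with the convention
`s_0 = 0`. -/
def faceJ (d : ℕ) (J : Set ℕ) : Set (Fin (d - 1) → ℝ) :=
  {s | s ∈ Cd d ∧ ∀ j ∈ J, padSeq d s j = padSeq d s (j + 1)}

namespace St15

variable {Fq : Type} [Field Fq] [Fintype Fq]

lemma two_le_q : (2:ℝ) ≤ (Fintype.card Fq : ℝ) := by
  exact_mod_cast Fintype.one_lt_card (α := Fq)

lemma one_le_q : (1:ℝ) ≤ (Fintype.card Fq : ℝ) := le_trans (by norm_num) two_le_q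

lemma absA_nonneg (y : Polynomial Fq) : 0 ≤ absA Fq y := by
  unfold absA; split <;> positivity

lemma one_le_absA {y : Polynomial Fq} (hy : y ≠ 0) : 1 ≤ absA Fq y := by
  unfold absA; rw [if_neg hy]
  exact one_le_pow₀ (one_le_q (Fq := Fq))

lemma pow_le_absA {y : Polynomial Fq} (hy : y ≠ 0) {N : ℕ} (hN : N ≤ y.natDegree) :
    (Fintype.card Fq : ℝ) ^ N ≤ absA Fq y := by
  unfold absA; rw [if_neg hy]
  exact pow_le_pow_right₀ (one_le_q (Fq := Fq)) hN

lemma polys_finite (N : ℕ) : {p : Polynomial Fq | p.natDegree ≤ N}.Finite := by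
  apply Set.Finite.of_finite_image (f := fun p => (fun i : Fin (N+1) => p.coeff (i : ℕ)))
  · exact Set.toFinite _
  · intro p hp q hq h
    simp only [Set.mem_setOf_eq] at hp hq
    ext i
    by_cases hi : i ≤ N
    · exact congrFun h ⟨i, by omega⟩
    · rw [Polynomial.coeff_eq_zero_of_natDegree_lt (by omega : p.natDegree < i),
        Polynomial.coeff_eq_zero_of_natDegree_lt (by omega : q.natDegree < i)]

section Eps

variable (r n : ℕ) (c : Fin n → ℝ)

/-- the threshold function -/
def thr (y : {y : Fin n → Polynomial Fq // y ≠ 0}) : ℝ :=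
  ⨆ i : Fin n, (absA Fq (y.1 i)) ^ r * c i

lemma thr_bdd (y : Fin n → Polynomial Fq) :
    BddAbove (Set.range fun i : Fin n => (absA Fq (y i)) ^ r * c i) :=
  (Set.finite_range _).bddAbove

lemma term_nonneg (hc : ∀ i, 0 ≤ c i) (y : Fin n → Polynomial Fq) (i : Fin n) :
    0 ≤ (absA Fq (y i)) ^ r * c i :=
  mul_nonneg (pow_nonneg (absA_nonneg _) _) (hc i)

lemma thr_pos (hc : ∀ i, 0 < c i) (y : {y : Fin n → Polynomial Fq // y ≠ 0}) :
    0 < thr r n c y := by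
  obtain ⟨i, hi⟩ := Function.ne_iff.mp y.2
  have h1 : c i ≤ (absA Fq (y.1 i)) ^ r * c i := by
    nth_rewrite 1 [← one_mul (c i)]
    exact mul_le_mul_of_nonneg_right (one_le_pow₀ (one_le_absA hi)) (hc i).le
  exact lt_of_lt_of_le (hc i) (le_trans h1 (le_ciSup (thr_bdd r n c y.1) i))

lemma thr_lt_finite (hr : 1 ≤ r) (hc : ∀ i, 0 < c i) (B : ℝ) :
    {y : {y : Fin n → Polynomial Fq // y ≠ 0} | thr r n c y < B}.Finite := by
  rcases Nat.eq_zero_or_pos n with hn | hn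
  · subst hn
    haveI : IsEmpty {y : Fin 0 → Polynomial Fq // y ≠ 0} :=
      ⟨fun y => y.2 (funext fun i => i.elim0)⟩
    exact Set.toFinite _
  · haveI : Nonempty (Fin n) := ⟨⟨0, hn⟩⟩
    set m := Finset.univ.inf' Finset.univ_nonempty c with hm
    have hmpos : 0 < m := by
      obtain ⟨i, _, hi⟩ := Finset.exists_mem_eq_inf' Finset.univ_nonempty c
      rw [hm, hi]; exact hc i
    obtain ⟨N, hN⟩ := pow_unbounded_of_one_lt (B / m) (lt_of_lt_of_le one_lt_two (two_le_q (Fq := Fq)))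
    apply Set.Finite.subset
      (Set.Finite.preimage (Set.injOn_of_injective Subtype.val_injective)
        (Set.Finite.pi (fun _ : Fin n => polys_finite (Fq := Fq) N)))
    intro y hy
    intro i _
    simp only [Set.mem_setOf_eq]
    by_contra hdeg
    push_neg at hdeg
    have hne : y.1 i ≠ 0 := by
      intro h0; rw [h0] at hdeg; simp [Polynomial.natDegree_zero] at hdeg
    have h1 : (Fintype.card Fq : ℝ) ^ N ≤ absA Fq (y.1 i) := pow_le_absA hne (by omega)
    have h2 : absA Fq (y.1 i) ≤ (absA Fq (y.1 i)) ^ r :=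
      le_self_pow₀ (one_le_absA hne) (by omega)
    have h3 : (Fintype.card Fq : ℝ) ^ N * m ≤ (absA Fq (y.1 i)) ^ r * c i := by
      exact mul_le_mul (le_trans h1 h2) (Finset.inf'_le c (Finset.mem_univ i)) hmpos.le
        (pow_nonneg (absA_nonneg _) _)
    have h4 : B < (Fintype.card Fq : ℝ) ^ N * m := by
      rw [div_lt_iff₀ hmpos] at hN; linarith
    have h5 : (absA Fq (y.1 i)) ^ r * c i ≤ thr r n c y := le_ciSup (thr_bdd r n c y.1) i
    have := hy
    simp only [Set.mem_setOf_eq] at this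
    linarith

end Eps

end St15

namespace St15

variable {Fq : Type} [Field Fq] [Fintype Fq]

section Eps2

variable (r n : ℕ) (c : Fin n → ℝ)

lemma eps_summable (hr : 1 ≤ r) (hc : ∀ i, 0 < c i) (x : ℝ) :
    Summable (fun y : {y : Fin n → Polynomial Fq // y ≠ 0} => max (x - thr r n c y) 0) := by
  apply summable_of_ne_finset_zero (s := (thr_lt_finite r n c hr hc x).toFinset)
  intro y hy
  simp only [Set.Finite.mem_toFinset, Set.mem_setOf_eq, not_lt] at hy
  exact max_eq_right (by linarith)

lemma epsFun_eq_x_add (x : ℝ) :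
    epsFun Fq r n c x = x + ∑' y : {y : Fin n → Polynomial Fq // y ≠ 0},
      max (x - thr r n c y) 0 := rfl

lemma le_epsFun (x : ℝ) : x ≤ epsFun Fq r n c x :=
  le_add_of_nonneg_right (tsum_nonneg fun _ => le_max_right _ _)

lemma epsFun_mono (hr : 1 ≤ r) (hc : ∀ i, 0 < c i) {x x' : ℝ} (h : x ≤ x') :
    epsFun Fq r n c x ≤ epsFun Fq r n c x' :=
  add_le_add h (Summable.tsum_le_tsum (fun y => max_le_max (sub_le_sub_right h _) le_rfl)
    (eps_summable r n c hr hc x) (eps_summable r n c hr hc x'))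

lemma epsFun_strictMono (hr : 1 ≤ r) (hc : ∀ i, 0 < c i) {x x' : ℝ} (h : x < x') :
    epsFun Fq r n c x < epsFun Fq r n c x' :=
  add_lt_add_of_lt_of_le h (Summable.tsum_le_tsum (fun y => max_le_max (sub_le_sub_right h.le _) le_rfl)
    (eps_summable r n c hr hc x) (eps_summable r n c hr hc x'))

lemma epsFun_of_nonpos (hc : ∀ i, 0 < c i) {x : ℝ} (hx : x ≤ 0) :
    epsFun Fq r n c x = x := by
  rw [epsFun_eq_x_add]
  have : (fun y : {y : Fin n → Polynomial Fq // y ≠ 0} => max (x - thr r n c y) 0)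
      = fun _ => 0 := by
    funext y
    exact max_eq_right (by have := thr_pos r n c hc y; linarith)
  rw [this, tsum_zero, add_zero]

lemma epsFun_exists (hr : 1 ≤ r) (hc : ∀ i, 0 < c i) {τ : ℝ} (hτ : 0 ≤ τ) :
    ∃ x, 0 ≤ x ∧ x ≤ τ ∧ epsFun Fq r n c x = τ := by
  classical
  set S := (thr_lt_finite (Fq := Fq) r n c hr hc τ).toFinset with hS
  set g : ℝ → ℝ := fun x => x + ∑ y ∈ S, max (x - thr r n c y) 0 with hg
  have hgx : ∀ x : ℝ, x ≤ τ → epsFun Fq r n c x = g x := by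
    intro x hx
    rw [epsFun_eq_x_add, hg]
    congr 1
    apply tsum_eq_sum
    intro y hy
    simp only [hS, Set.Finite.mem_toFinset, Set.mem_setOf_eq, not_lt] at hy
    exact max_eq_right (by linarith)
  have hgc : Continuous g := by
    apply continuous_id.add
    exact continuous_finset_sum _ fun y _ =>
      ((continuous_id.sub continuous_const).max continuous_const)
  have hg0 : g 0 = 0 := by
    rw [hg]
    simp only [zero_add]
    rw [Finset.sum_eq_zero, ]
    intro y _
    exact max_eq_right (by have := thr_pos r n c hc y; linarith)
  have hgτ : τ ≤ g τ := by
    rw [← hgx τ le_rfl]; exact le_epsFun r n c τ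
  have := intermediate_value_Icc hτ hgc.continuousOn
  have hmem : τ ∈ Set.Icc (g 0) (g τ) := ⟨by rw [hg0]; exact hτ, hgτ⟩
  obtain ⟨x, hx, hgxτ⟩ := this hmem
  exact ⟨x, hx.1, hx.2, by rw [hgx x hx.2]; exact hgxτ⟩

end Eps2

section Tri

variable {r i0 n : ℕ}

/-- extension by zero -/
def extZero (h : i0 ≤ n) (w : Fin i0 → Polynomial Fq) : Fin n → Polynomial Fq :=
  fun t => if ht : (t : ℕ) < i0 then w ⟨(t : ℕ), ht⟩ else 0

lemma extZero_castLE (h : i0 ≤ n) (w : Fin i0 → Polynomial Fq) (j : Fin i0) :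
    extZero h w (Fin.castLE h j) = w j := by
  unfold extZero
  rw [dif_pos (by exact j.isLt)]
  rfl

lemma extZero_ne_zero (h : i0 ≤ n) {w : Fin i0 → Polynomial Fq} (hw : w ≠ 0) :
    extZero h w ≠ 0 := by
  obtain ⟨j, hj⟩ := Function.ne_iff.mp hw
  intro h0
  exact hj (by rw [← extZero_castLE h w j, h0]; rfl)

lemma extZero_inj (h : i0 ≤ n) : Function.Injective (extZero (Fq := Fq) h) := by
  intro w w' hww
  funext j
  have := congrFun hww (Fin.castLE h j)
  rwa [extZero_castLE, extZero_castLE] at this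

lemma sup_ext (hr : 1 ≤ r) (h : i0 ≤ n) (c : Fin n → ℝ) (hc : ∀ i, 0 ≤ c i)
    {w : Fin i0 → Polynomial Fq} (hw : w ≠ 0) :
    (⨆ t : Fin n, (absA Fq (extZero h w t)) ^ r * c t)
      = ⨆ j : Fin i0, (absA Fq (w j)) ^ r * c (Fin.castLE h j) := by
  obtain ⟨j₀, hj₀⟩ := Function.ne_iff.mp hw
  haveI : Nonempty (Fin i0) := ⟨j₀⟩
  haveI : Nonempty (Fin n) := ⟨Fin.castLE h j₀⟩
  apply le_antisymm
  · apply ciSup_le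
    intro t
    by_cases ht : (t : ℕ) < i0
    · have : extZero h w t = w ⟨(t : ℕ), ht⟩ := by unfold extZero; rw [dif_pos ht]
      rw [this]
      have hct : c t = c (Fin.castLE h ⟨(t : ℕ), ht⟩) :=
        congrArg c (Fin.ext rfl)
      rw [hct]
      exact le_ciSup (f := fun j : Fin i0 => (absA Fq (w j)) ^ r * c (Fin.castLE h j))
        ((Set.finite_range _).bddAbove) (⟨(t : ℕ), ht⟩ : Fin i0)
    · have : extZero h w t = 0 := by unfold extZero; rw [dif_neg ht]
      rw [this]
      have h0 : absA Fq (0 : Polynomial Fq) = 0 := by unfold absA; rw [if_pos rfl]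
      rw [h0, zero_pow (by omega), zero_mul]
      calc (0:ℝ) ≤ (absA Fq (w j₀)) ^ r * c (Fin.castLE h j₀) :=
            mul_nonneg (pow_nonneg (absA_nonneg _) _) (hc _)
        _ ≤ _ := le_ciSup (f := fun j : Fin i0 => (absA Fq (w j)) ^ r * c (Fin.castLE h j))
            ((Set.finite_range _).bddAbove) j₀
  · apply ciSup_le
    intro j
    rw [← extZero_castLE h w j]
    exact le_ciSup (f := fun t : Fin n => (absA Fq (extZero h w t)) ^ r * c t)
      ((Set.finite_range _).bddAbove) (Fin.castLE h j)

lemma eps_prefix_le (hr : 1 ≤ r) (h : i0 ≤ n) (c : Fin n → ℝ) (hc : ∀ i, 0 < c i) (x : ℝ) :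
    epsFun Fq r i0 (fun j => c (Fin.castLE h j)) x ≤ epsFun Fq r n c x := by
  rw [epsFun_eq_x_add, epsFun_eq_x_add]
  apply add_le_add le_rfl
  apply (eps_summable r i0 (fun j => c (Fin.castLE h j)) hr (fun j => hc _) x).tsum_le_tsum_of_inj
    (fun w : {w : Fin i0 → Polynomial Fq // w ≠ 0} =>
      (⟨extZero h w.1, extZero_ne_zero h w.2⟩ : {y : Fin n → Polynomial Fq // y ≠ 0}))
  · intro w w' hww
    exact Subtype.ext (extZero_inj h (congrArg Subtype.val hww))
  · intro y _
    exact le_max_right _ _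
  · intro w
    have := sup_ext hr h c (fun i => (hc i).le) w.2
    unfold thr
    rw [this]
  · exact eps_summable r n c hr hc x

lemma eps_tri (hr : 1 ≤ r) (h : i0 ≤ n) (c : Fin n → ℝ) (hc : ∀ i, 0 < c i) {x : ℝ}
    (hx : ∀ t : Fin n, i0 ≤ (t : ℕ) → x ≤ c t) :
    epsFun Fq r n c x = epsFun Fq r i0 (fun j => c (Fin.castLE h j)) x := by
  rw [epsFun_eq_x_add, epsFun_eq_x_add]
  congr 1
  apply tsum_eq_tsum_of_ne_zero_bij
    (fun w : Function.support (fun w : {w : Fin i0 → Polynomial Fq // w ≠ 0} =>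
        max (x - thr r i0 (fun j => c (Fin.castLE h j)) w) 0) =>
      (⟨extZero h w.1.1, extZero_ne_zero h w.1.2⟩ : {y : Fin n → Polynomial Fq // y ≠ 0}))
  · intro w w' hww
    exact Subtype.ext (Subtype.ext (extZero_inj h (congrArg Subtype.val hww)))
  · intro y hy
    simp only [Function.mem_support] at hy
    have hthr : thr r n c y < x := by
      by_contra hcon
      push_neg at hcon
      exact hy (max_eq_right (by linarith))
    have htail : ∀ t : Fin n, i0 ≤ (t : ℕ) → y.1 t = 0 := by
      intro t ht
      by_contra hne
      have h1 : c t ≤ (absA Fq (y.1 t)) ^ r * c t := by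
        nth_rewrite 1 [← one_mul (c t)]
        exact mul_le_mul_of_nonneg_right (one_le_pow₀ (one_le_absA hne)) (hc t).le
      have h2 : (absA Fq (y.1 t)) ^ r * c t ≤ thr r n c y :=
        le_ciSup (f := fun i : Fin n => (absA Fq (y.1 i)) ^ r * c i)
          ((Set.finite_range _).bddAbove) t
      have := hx t ht
      linarith
    have hwne : (fun j : Fin i0 => y.1 (Fin.castLE h j)) ≠ 0 := by
      intro h0
      apply y.2
      funext t
      by_cases ht : (t : ℕ) < i0
      · have h1 := congrFun h0 (⟨(t : ℕ), ht⟩ : Fin i0)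
        simp only [Pi.zero_apply] at h1
        exact h1
      · exact htail t (by omega)
    have hyw : y.1 = extZero h (fun j : Fin i0 => y.1 (Fin.castLE h j)) := by
      funext t
      unfold extZero
      by_cases ht : (t : ℕ) < i0
      · rw [dif_pos ht]
        rfl
      · rw [dif_neg ht]
        exact htail t (by omega)
    refine ⟨⟨⟨fun j => y.1 (Fin.castLE h j), hwne⟩, ?_⟩, ?_⟩
    · simp only [Function.mem_support]
      unfold thr
      rw [← sup_ext hr h c (fun i => (hc i).le) hwne]
      rw [← hyw]
      exact hy
    · exact Subtype.ext hyw.symm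
  · intro w
    unfold thr
    rw [sup_ext hr h c (fun i => (hc i).le) w.1.2]

end Tri

end St15

namespace St15

variable {Fq : Type} [Field Fq] [Fintype Fq]

section Solve

open Classical in
def Vstep (Fq : Type) [Field Fq] [Fintype Fq] (r : ℕ) (τ : ℕ → ℝ) (p : ℕ → ℝ) (m : ℕ) : ℝ :=
  if h : ∃ z, 0 ≤ z ∧
      epsFun Fq r m (fun j : Fin m => (Fintype.card Fq : ℝ) ^ r * p (j : ℕ)) z = τ m then
    h.choose
  else 1

def Vseq (Fq : Type) [Field Fq] [Fintype Fq] (r : ℕ) (τ : ℕ → ℝ) : ℕ → ℕ → ℝ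
  | 0 => fun _ => 1
  | (m+1) => Function.update (Vseq Fq r τ m) m (Vstep Fq r τ (Vseq Fq r τ m) m)

def xSeq (Fq : Type) [Field Fq] [Fintype Fq] (r : ℕ) (τ : ℕ → ℝ) (m : ℕ) : ℝ :=
  Vseq Fq r τ (m+1) m

variable (r : ℕ) (τ : ℕ → ℝ)

lemma Vseq_stable {j m : ℕ} (hj : j < m) : ∀ {m'}, m ≤ m' → Vseq Fq r τ m' j = Vseq Fq r τ m j := by
  intro m' hm
  induction m' with
  | zero => omega
  | succ k ih =>
    rcases Nat.lt_or_ge m (k+1) with hlt | hge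
    · have hk : m ≤ k := by omega
      show Function.update (Vseq Fq r τ k) k (Vstep Fq r τ (Vseq Fq r τ k) k) j = _
      rw [Function.update_of_ne (by omega) _ _]
      exact ih hk
    · have : m = k + 1 := by omega
      rw [this]

lemma Vseq_eq_xSeq {j m : ℕ} (hj : j < m) : Vseq Fq r τ m j = xSeq Fq r τ j :=
  Vseq_stable r τ (Nat.lt_succ_self j) hj

lemma xSeq_def (m : ℕ) : xSeq Fq r τ m = Vstep Fq r τ (Vseq Fq r τ m) m := by
  show Function.update (Vseq Fq r τ m) m (Vstep Fq r τ (Vseq Fq r τ m) m) m = _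
  rw [Function.update_self]

lemma xSeq_spec (hr : 1 ≤ r) (hτ : ∀ m, 0 < τ m) :
    ∀ m, 0 < xSeq Fq r τ m ∧
      epsFun Fq r m (fun j : Fin m => (Fintype.card Fq : ℝ) ^ r * xSeq Fq r τ (j : ℕ))
        (xSeq Fq r τ m) = τ m := by
  intro m
  induction m using Nat.strong_induction_on with
  | _ m ih =>
    have hfun : (fun j : Fin m => (Fintype.card Fq : ℝ) ^ r * Vseq Fq r τ m (j : ℕ))
        = fun j : Fin m => (Fintype.card Fq : ℝ) ^ r * xSeq Fq r τ (j : ℕ) := by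
      funext j
      rw [Vseq_eq_xSeq r τ j.isLt]
    have hcpos : ∀ j : Fin m, 0 < (Fintype.card Fq : ℝ) ^ r * xSeq Fq r τ (j : ℕ) := by
      intro j
      exact mul_pos (pow_pos (by have := two_le_q (Fq := Fq); linarith) r) (ih j j.isLt).1
    have hex : ∃ z, 0 ≤ z ∧
        epsFun Fq r m (fun j : Fin m => (Fintype.card Fq : ℝ) ^ r * Vseq Fq r τ m (j : ℕ)) z
          = τ m := by
      rw [hfun]
      obtain ⟨z, hz0, _, hz⟩ := epsFun_exists (Fq := Fq) r m _ hr hcpos (le_of_lt (hτ m))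
      exact ⟨z, hz0, hz⟩
    have hdef : xSeq Fq r τ m = hex.choose := by
      rw [xSeq_def, Vstep, dif_pos hex]
    obtain ⟨hge, heq⟩ := hex.choose_spec
    have heq' : epsFun Fq r m (fun j : Fin m => (Fintype.card Fq : ℝ) ^ r * xSeq Fq r τ (j : ℕ))
        (xSeq Fq r τ m) = τ m := by rw [hdef, ← hfun]; exact heq
    refine ⟨?_, heq'⟩
    rcases lt_or_eq_of_le (hdef ▸ hge : (0:ℝ) ≤ xSeq Fq r τ m) with h | h
    · exact h
    · exfalso
      have : epsFun Fq r m (fun j : Fin m => (Fintype.card Fq : ℝ) ^ r * xSeq Fq r τ (j : ℕ))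
          (xSeq Fq r τ m) = xSeq Fq r τ m := by
        apply epsFun_of_nonpos r m _ hcpos
        rw [← h]
      rw [this, ← h] at heq'
      exact absurd heq'.symm (ne_of_gt (hτ m))

lemma one_le_qpow (r : ℕ) : (1:ℝ) ≤ (Fintype.card Fq : ℝ) ^ r :=
  one_le_pow₀ (one_le_q (Fq := Fq))

lemma xSeq_mono (hr : 1 ≤ r) (hτ : ∀ m, 0 < τ m) (hτm : ∀ m, τ m ≤ τ (m+1)) :
    Monotone (xSeq Fq r τ) := by
  apply monotone_nat_of_le_succ
  intro m
  by_contra hcon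
  push_neg at hcon
  set x := xSeq Fq r τ with hx
  have hpos := fun m => (xSeq_spec (Fq := Fq) r τ hr hτ m).1
  have heqm := (xSeq_spec (Fq := Fq) r τ hr hτ m).2
  have heqm1 := (xSeq_spec (Fq := Fq) r τ hr hτ (m+1)).2
  have hcpos : ∀ j : Fin (m+1), 0 < (Fintype.card Fq : ℝ) ^ r * x (j : ℕ) :=
    fun j => mul_pos (by have := one_le_qpow (Fq := Fq) r; linarith) (hpos j)
  have hxcond : ∀ t : Fin (m+1), m ≤ (t : ℕ) →
      x (m+1) ≤ (Fintype.card Fq : ℝ) ^ r * x (t : ℕ) := by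
    intro t ht
    have htm : (t : ℕ) = m := by omega
    calc x (m+1) ≤ x m := hcon.le
      _ ≤ (Fintype.card Fq : ℝ) ^ r * x m := by
          nth_rewrite 1 [← one_mul (x m)]
          exact mul_le_mul_of_nonneg_right (one_le_qpow r) (hpos m).le
      _ = (Fintype.card Fq : ℝ) ^ r * x (t : ℕ) := by rw [htm]
  have htri : epsFun Fq r (m+1) (fun j : Fin (m+1) => (Fintype.card Fq : ℝ) ^ r * x (j : ℕ))
      (x (m+1)) = epsFun Fq r m (fun j : Fin m => (Fintype.card Fq : ℝ) ^ r * x (j : ℕ))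
      (x (m+1)) := by
    rw [eps_tri hr (Nat.le_succ m) _ hcpos hxcond]
    rfl
  have hlt : epsFun Fq r m (fun j : Fin m => (Fintype.card Fq : ℝ) ^ r * x (j : ℕ)) (x (m+1))
      < epsFun Fq r m (fun j : Fin m => (Fintype.card Fq : ℝ) ^ r * x (j : ℕ)) (x m) :=
    epsFun_strictMono r m _ hr (fun j => mul_pos (by have := one_le_qpow (Fq := Fq) r; linarith)
      (hpos j)) hcon
  rw [heqm] at hlt
  rw [htri] at heqm1
  have := hτm m
  linarith

lemma xSeq_eq_adj (hr : 1 ≤ r) (hτ : ∀ m, 0 < τ m) (hτm : ∀ m, τ m ≤ τ (m+1)) {m : ℕ}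
    (h : τ m = τ (m+1)) : xSeq Fq r τ m = xSeq Fq r τ (m+1) := by
  set x := xSeq Fq r τ with hx
  have hpos := fun m => (xSeq_spec (Fq := Fq) r τ hr hτ m).1
  have hle : x m ≤ x (m+1) := xSeq_mono r τ hr hτ hτm (Nat.le_succ m)
  rcases lt_or_eq_of_le hle with hlt | heq
  · exfalso
    have heqm := (xSeq_spec (Fq := Fq) r τ hr hτ m).2
    have heqm1 := (xSeq_spec (Fq := Fq) r τ hr hτ (m+1)).2
    have hcpos : ∀ j : Fin (m+1), 0 < (Fintype.card Fq : ℝ) ^ r * x (j : ℕ) :=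
      fun j => mul_pos (by have := one_le_qpow (Fq := Fq) r; linarith) (hpos j)
    have hpre : epsFun Fq r m
        (fun j : Fin m => (fun i : Fin (m+1) => (Fintype.card Fq : ℝ) ^ r * x (i : ℕ))
          (Fin.castLE (Nat.le_succ m) j)) (x (m+1))
        ≤ epsFun Fq r (m+1) (fun j : Fin (m+1) => (Fintype.card Fq : ℝ) ^ r * x (j : ℕ))
          (x (m+1)) :=
      eps_prefix_le hr (Nat.le_succ m) _ hcpos _
    have hfun : (fun j : Fin m => (fun i : Fin (m+1) => (Fintype.card Fq : ℝ) ^ r * x (i : ℕ))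
        (Fin.castLE (Nat.le_succ m) j)) = fun j : Fin m => (Fintype.card Fq : ℝ) ^ r * x (j : ℕ) := by
      funext j; rfl
    rw [hfun] at hpre
    have hstrict : epsFun Fq r m (fun j : Fin m => (Fintype.card Fq : ℝ) ^ r * x (j : ℕ)) (x m)
        < epsFun Fq r m (fun j : Fin m => (Fintype.card Fq : ℝ) ^ r * x (j : ℕ)) (x (m+1)) :=
      epsFun_strictMono r m _ hr (fun j => mul_pos (by have := one_le_qpow (Fq := Fq) r; linarith)
        (hpos j)) hlt
    rw [(xSeq_spec (Fq := Fq) r τ hr hτ m).2] at hstrict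
    rw [(xSeq_spec (Fq := Fq) r τ hr hτ (m+1)).2] at hpre
    rw [h] at hstrict
    linarith
  · exact heq

end Solve

end St15

namespace St15

variable {Fq : Type} [Field Fq] [Fintype Fq]

section Xi

open Classical in
/-- the least index with nonzero coordinate -/
def minIdx {d : ℕ} (s : Fin (d - 1) → ℝ) (hz : ∃ j : Fin (d - 1), s j ≠ 0) : Fin (d - 1) :=
  (Finset.univ.filter (fun j : Fin (d - 1) => s j ≠ 0)).min'
    (by obtain ⟨j, hj⟩ := hz
        exact ⟨j, Finset.mem_filter.mpr ⟨Finset.mem_univ j, hj⟩⟩)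

open Classical in
lemma minIdx_ne {d : ℕ} (s : Fin (d - 1) → ℝ) (hz : ∃ j : Fin (d - 1), s j ≠ 0) :
    s (minIdx s hz) ≠ 0 := by
  have := Finset.min'_mem (Finset.univ.filter (fun j : Fin (d - 1) => s j ≠ 0))
    (by obtain ⟨j, hj⟩ := hz
        exact ⟨j, Finset.mem_filter.mpr ⟨Finset.mem_univ j, hj⟩⟩)
  exact (Finset.mem_filter.mp this).2

open Classical in
lemma minIdx_min {d : ℕ} (s : Fin (d - 1) → ℝ) (hz : ∃ j : Fin (d - 1), s j ≠ 0)
    (j : Fin (d - 1)) (hj : (j : ℕ) < ((minIdx s hz) : ℕ)) : s j = 0 := by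
  by_contra hne
  have hmem : j ∈ Finset.univ.filter (fun j : Fin (d - 1) => s j ≠ 0) :=
    Finset.mem_filter.mpr ⟨Finset.mem_univ j, hne⟩
  have := Finset.min'_le _ j hmem
  rw [Fin.le_def] at this
  unfold minIdx at hj
  omega

open Classical in
lemma minIdx_eq {d : ℕ} (s : Fin (d - 1) → ℝ) (hz : ∃ j : Fin (d - 1), s j ≠ 0)
    (j0 : Fin (d - 1)) (hne : s j0 ≠ 0) (hmin : ∀ j : Fin (d - 1), (j : ℕ) < (j0 : ℕ) → s j = 0) :
    minIdx s hz = j0 := by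
  apply le_antisymm
  · exact Finset.min'_le _ j0 (Finset.mem_filter.mpr ⟨Finset.mem_univ j0, hne⟩)
  · apply Finset.le_min'
    intro y hy
    rw [Fin.le_def]
    by_contra hlt
    exact (Finset.mem_filter.mp hy).2 (hmin y (by omega))

open Classical in
lemma xiFun_pos_apply {d k : ℕ} (s : Fin (d - 1) → ℝ) (hz : ∃ j : Fin (d - 1), s j ≠ 0)
    (i : Fin (d - 1)) :
    xiFun Fq d k s i =
      if (i : ℕ) < ((minIdx s hz) : ℕ) then 0
      else
        epsFun Fq (((minIdx s hz) : ℕ) + 1) (d - 1 - ((minIdx s hz) : ℕ))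
          (fun t : Fin (d - 1 - ((minIdx s hz) : ℕ)) =>
            (s ⟨((minIdx s hz) : ℕ) + (t : ℕ),
              by have := t.isLt; have := (minIdx s hz).isLt; omega⟩) ^ (((minIdx s hz) : ℕ) + 1))
          (((Fintype.card Fq : ℝ) ^ (k * (((minIdx s hz) : ℕ) + 1)))⁻¹
            * (s i) ^ (((minIdx s hz) : ℕ) + 1)) := by
  unfold xiFun
  rw [dif_pos hz]
  rfl

lemma xiFun_zero_apply {d k : ℕ} (s : Fin (d - 1) → ℝ) (hz : ¬ ∃ j : Fin (d - 1), s j ≠ 0)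
    (i : Fin (d - 1)) : xiFun Fq d k s i = 0 := by
  unfold xiFun
  rw [dif_neg hz]

open Classical in
lemma xiFun_apply_of_minIdx_eq {d k : ℕ} (s : Fin (d - 1) → ℝ) (hz : ∃ j : Fin (d - 1), s j ≠ 0)
    (j1 : Fin (d - 1)) (hj1 : minIdx s hz = j1) (i : Fin (d - 1)) :
    xiFun Fq d k s i =
      if (i : ℕ) < (j1 : ℕ) then 0
      else
        epsFun Fq ((j1 : ℕ) + 1) (d - 1 - (j1 : ℕ))
          (fun t : Fin (d - 1 - (j1 : ℕ)) =>
            (s ⟨(j1 : ℕ) + (t : ℕ),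
              by have := t.isLt; have := j1.isLt; omega⟩) ^ ((j1 : ℕ) + 1))
          (((Fintype.card Fq : ℝ) ^ (k * ((j1 : ℕ) + 1)))⁻¹
            * (s i) ^ ((j1 : ℕ) + 1)) := by
  subst hj1
  exact xiFun_pos_apply s hz i

end Xi

end St15

namespace St15

variable {Fq : Type} [Field Fq] [Fintype Fq]

lemma xi_forward (d : ℕ) (hd : 1 ≤ d) (J : Set ℕ) (hJ : ∀ j ∈ J, j + 2 ≤ d)
    (s : Fin (d - 1) → ℝ) (hs : s ∈ faceJ d J) : xiFun Fq d 1 s ∈ faceJ d J := by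
  obtain ⟨⟨hnn, hmono⟩, hface⟩ := hs
  by_cases hz : ∃ j : Fin (d - 1), s j ≠ 0
  case neg =>
    push_neg at hz
    have h0 : ∀ i, xiFun Fq d 1 s i = 0 := fun i => xiFun_zero_apply s (by push_neg; exact hz) i
    refine ⟨⟨fun i => le_of_eq (h0 i).symm, fun a b _ => le_of_eq ((h0 a).trans (h0 b).symm)⟩, ?_⟩
    intro j hj
    unfold padSeq
    split <;> split <;> simp [h0]
  case pos =>
    set j0 := minIdx s hz with hj0
    set r := (j0 : ℕ) + 1 with hrdef
    have hr : 1 ≤ r := by omega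
    set n := d - 1 - (j0 : ℕ) with hn
    set c : Fin n → ℝ := fun t : Fin n =>
      (s ⟨(j0 : ℕ) + (t : ℕ), by have := t.isLt; have := j0.isLt; omega⟩) ^ r with hc
    have hj0pos : 0 < s j0 := lt_of_le_of_ne (hnn j0) (Ne.symm (minIdx_ne s hz))
    have hble : ∀ i : Fin (d - 1), (j0 : ℕ) ≤ (i : ℕ) → 0 < s i := by
      intro i hi
      exact lt_of_lt_of_le hj0pos (hmono (by rwa [Fin.le_def]))
    have hcpos : ∀ t : Fin n, 0 < c t := by
      intro t
      exact pow_pos (hble _ (by simp)) r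
    set xarg : Fin (d - 1) → ℝ := fun i =>
      ((Fintype.card Fq : ℝ) ^ (1 * r))⁻¹ * (s i) ^ r with hxarg
    have hxargnn : ∀ i, 0 ≤ xarg i := fun i =>
      mul_nonneg (inv_nonneg.mpr (pow_nonneg (by positivity) _)) (pow_nonneg (hnn i) _)
    have hxargmono : ∀ a b : Fin (d - 1), a ≤ b → xarg a ≤ xarg b := by
      intro a b hab
      apply mul_le_mul_of_nonneg_left _ (inv_nonneg.mpr (pow_nonneg (by positivity) _))
      exact pow_le_pow_left₀ (hnn a) (hmono hab) r
    have hxi : ∀ i : Fin (d - 1), xiFun Fq d 1 s i =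
        if (i : ℕ) < (j0 : ℕ) then 0 else epsFun Fq r n c (xarg i) := by
      intro i
      exact xiFun_pos_apply s hz i
    have hxinn : ∀ i, 0 ≤ xiFun Fq d 1 s i := by
      intro i
      rw [hxi i]
      split
      · exact le_rfl
      · exact le_trans (hxargnn i) (le_epsFun r n c _)
    refine ⟨⟨hxinn, ?_⟩, ?_⟩
    · -- monotone
      intro a b hab
      rw [hxi a, hxi b]
      by_cases hb : (b : ℕ) < (j0 : ℕ)
      · have ha : (a : ℕ) < (j0 : ℕ) := by rw [Fin.le_def] at hab; omega
        rw [if_pos ha, if_pos hb]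
      · by_cases ha : (a : ℕ) < (j0 : ℕ)
        · rw [if_pos ha, if_neg hb]
          exact le_trans (hxargnn b) (le_epsFun r n c _)
        · rw [if_neg ha, if_neg hb]
          exact epsFun_mono r n c hr hcpos (hxargmono a b hab)
    · -- face conditions
      intro j hj
      have hd2 : j + 2 ≤ d := hJ j hj
      rcases Nat.eq_zero_or_pos j with rfl | hjpos
      · -- j = 0
        have h1d : 1 ≤ d - 1 := by omega
        have hpad0 : padSeq d (xiFun Fq d 1 s) 0 = 0 := by unfold padSeq; rw [dif_neg (by omega)]
        rw [hpad0]
        unfold padSeq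
        rw [dif_pos ⟨le_rfl, h1d⟩]
        have hs0 : s ⟨0, by omega⟩ = 0 := by
          have := hface 0 hj
          unfold padSeq at this
          rw [dif_neg (by omega), dif_pos ⟨le_rfl, h1d⟩] at this
          exact this.symm
        have hj0ne : (0 : ℕ) < (j0 : ℕ) := by
          by_contra hcon
          push_neg at hcon
          apply minIdx_ne s hz
          have : j0 = ⟨0, by omega⟩ := Fin.ext (by simpa using Nat.le_zero.mp hcon)
          rw [← hj0, this, hs0]
        rw [hxi, if_pos (by simpa using hj0ne : ((⟨1 - 1, by omega⟩ : Fin (d-1)) : ℕ) < (j0 : ℕ))]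
      · -- j = m + 1
        obtain ⟨m, rfl⟩ := Nat.exists_eq_add_of_le hjpos
        rw [Nat.add_comm 1 m] at *
        have hmle : m + 1 ≤ d - 1 := by omega
        have hm2le : m + 2 ≤ d - 1 := by omega
        have hts : s ⟨m, by omega⟩ = s ⟨m + 1, by omega⟩ := by
          have := hface (m+1) hj
          unfold padSeq at this
          rw [dif_pos ⟨by omega, hmle⟩, dif_pos ⟨by omega, hm2le⟩] at this
          convert this using 2 <;> simp
        unfold padSeq
        rw [dif_pos ⟨by omega, hmle⟩, dif_pos ⟨by omega, hm2le⟩]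
        have ha : (⟨m + 1 - 1, by omega⟩ : Fin (d - 1)) = ⟨m, by omega⟩ := Fin.ext (by simp)
        have hb : (⟨m + 1 + 1 - 1, by omega⟩ : Fin (d - 1)) = ⟨m + 1, by omega⟩ := Fin.ext (by simp)
        rw [ha, hb, hxi, hxi]
        by_cases hcase : m + 1 < (j0 : ℕ)
        · rw [if_pos (by simp; omega), if_pos (by simp; omega)]
        · by_cases hcase2 : m < (j0 : ℕ)
          · -- j0 = m+1, contradiction
            exfalso
            have h1 : s ⟨m, by omega⟩ = 0 := minIdx_min s hz _ (by simpa using hcase2)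
            have h2 : (j0 : ℕ) = m + 1 := by omega
            apply minIdx_ne s hz
            have : j0 = ⟨m + 1, by omega⟩ := Fin.ext (by simpa using h2)
            rw [← hj0, this, ← hts, h1]
          · rw [if_neg (by simp; omega), if_neg (by simp; omega)]
            congr 1
            rw [hxarg]
            simp only
            rw [hts]

end St15

namespace St15

variable {Fq : Type} [Field Fq] [Fintype Fq]

set_option maxHeartbeats 3000000 in
lemma xi_surj (d : ℕ) (hd : 1 ≤ d) (J : Set ℕ) (hJ : ∀ j ∈ J, j + 2 ≤ d)
    (t : Fin (d - 1) → ℝ) (ht : t ∈ faceJ d J) : ∃ s ∈ faceJ d J, xiFun Fq d 1 s = t := by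
  obtain ⟨⟨hnn, hmono⟩, hface⟩ := ht
  by_cases hz : ∃ j : Fin (d - 1), t j ≠ 0
  case neg =>
    refine ⟨t, ⟨⟨hnn, hmono⟩, hface⟩, ?_⟩
    funext i
    rw [xiFun_zero_apply t hz i]
    push_neg at hz
    exact (hz i).symm
  case pos =>
    set j0 := minIdx t hz with hj0
    have hj0lt : (j0 : ℕ) < d - 1 := j0.isLt
    set r := (j0 : ℕ) + 1 with hrdef
    have hr : 1 ≤ r := by omega
    have htpos : ∀ i : Fin (d - 1), (j0 : ℕ) ≤ (i : ℕ) → 0 < t i := by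
      intro i hi
      have h1 : 0 < t j0 := lt_of_le_of_ne (hnn j0) (Ne.symm (minIdx_ne t hz))
      exact lt_of_lt_of_le h1 (hmono (by rwa [Fin.le_def]))
    set τ : ℕ → ℝ := fun m => t ⟨min ((j0 : ℕ) + m) (d - 2), by omega⟩ with hτ
    have hτpos : ∀ m, 0 < τ m := by
      intro m
      apply htpos
      simp only [Fin.val_mk]
      omega
    have hτmono : ∀ m, τ m ≤ τ (m + 1) := by
      intro m
      apply hmono
      rw [Fin.le_def]
      simp only [Fin.val_mk]
      omega
    set x : ℕ → ℝ := xSeq Fq r τ with hxdef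
    have hxpos : ∀ m, 0 < x m := fun m => (xSeq_spec (Fq := Fq) r τ hr hτpos m).1
    have hxeq := fun m => (xSeq_spec (Fq := Fq) r τ hr hτpos m).2
    have hxmono : Monotone x := xSeq_mono r τ hr hτpos hτmono
    set q : ℝ := (Fintype.card Fq : ℝ) with hq
    have hqpos : (0:ℝ) < q := by rw [hq]; have := two_le_q (Fq := Fq); linarith
    have hqrpos : (0:ℝ) < q ^ r := pow_pos hqpos r
    set s : Fin (d - 1) → ℝ := fun i =>
      if (i : ℕ) < (j0 : ℕ) then 0 else q * (x ((i : ℕ) - (j0 : ℕ))) ^ ((r : ℝ))⁻¹ with hs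
    have hspos : ∀ i : Fin (d - 1), (j0 : ℕ) ≤ (i : ℕ) → 0 < s i := by
      intro i hi
      rw [hs]
      simp only
      rw [if_neg (by omega)]
      exact mul_pos hqpos (Real.rpow_pos_of_pos (hxpos _) _)
    have hs0 : ∀ i : Fin (d - 1), (i : ℕ) < (j0 : ℕ) → s i = 0 := by
      intro i hi
      rw [hs]
      simp only
      rw [if_pos hi]
    have hsnn : ∀ i, 0 ≤ s i := by
      intro i
      rcases lt_or_ge ((i : ℕ)) ((j0 : ℕ)) with h | h
      · rw [hs0 i h]
      · exact (hspos i h).le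
    have hsr : ∀ i : Fin (d - 1), (j0 : ℕ) ≤ (i : ℕ) →
        s i ^ r = q ^ r * x ((i : ℕ) - (j0 : ℕ)) := by
      intro i hi
      rw [hs]
      simp only
      rw [if_neg (by omega), mul_pow,
        Real.rpow_inv_natCast_pow (hxpos _).le (by omega : r ≠ 0)]
    have hsmono : Monotone s := by
      intro a b hab
      rw [Fin.le_def] at hab
      rcases lt_or_ge ((b : ℕ)) ((j0 : ℕ)) with h | h
      · rw [hs0 a (by omega), hs0 b h]
      · rcases lt_or_ge ((a : ℕ)) ((j0 : ℕ)) with h2 | h2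
        · rw [hs0 a h2]
          exact (hspos b h).le
        · rw [hs]
          simp only
          rw [if_neg (by omega), if_neg (by omega)]
          apply mul_le_mul_of_nonneg_left _ hqpos.le
          exact Real.rpow_le_rpow (hxpos _).le (hxmono (by omega)) (by positivity)
    have hsz : ∃ j : Fin (d - 1), s j ≠ 0 := ⟨j0, (hspos j0 le_rfl).ne'⟩
    have hminIdx : minIdx s hsz = j0 :=
      minIdx_eq s hsz j0 (hspos j0 le_rfl).ne' (fun j hj => hs0 j hj)
    -- s ∈ faceJ
    have hsface : s ∈ faceJ d J := by
      refine ⟨⟨hsnn, hsmono⟩, ?_⟩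
      intro j hj
      have hd2 : j + 2 ≤ d := hJ j hj
      rcases Nat.eq_zero_or_pos j with rfl | hjpos
      · have h1d : 1 ≤ d - 1 := by omega
        have ht0 : t ⟨0, by omega⟩ = 0 := by
          have := hface 0 hj
          unfold padSeq at this
          rw [dif_neg (by omega), dif_pos ⟨le_rfl, h1d⟩] at this
          exact this.symm
        have hj0ne : (0 : ℕ) < (j0 : ℕ) := by
          by_contra hcon
          push_neg at hcon
          apply minIdx_ne t hz
          have : j0 = ⟨0, by omega⟩ := Fin.ext (by simpa using Nat.le_zero.mp hcon)
          rw [← hj0, this, ht0]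
        unfold padSeq
        rw [dif_neg (by omega), dif_pos ⟨le_rfl, h1d⟩]
        exact (hs0 ⟨1 - 1, by omega⟩ (by simpa using hj0ne)).symm
      · obtain ⟨m, rfl⟩ := Nat.exists_eq_add_of_le hjpos
        rw [Nat.add_comm 1 m] at *
        have hmle : m + 1 ≤ d - 1 := by omega
        have hm2le : m + 2 ≤ d - 1 := by omega
        have htt : t ⟨m, by omega⟩ = t ⟨m + 1, by omega⟩ := by
          have := hface (m+1) hj
          unfold padSeq at this
          rw [dif_pos ⟨by omega, hmle⟩, dif_pos ⟨by omega, hm2le⟩] at this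
          convert this using 2 <;> simp
        unfold padSeq
        rw [dif_pos ⟨by omega, hmle⟩, dif_pos ⟨by omega, hm2le⟩]
        have ha : (⟨m + 1 - 1, by omega⟩ : Fin (d - 1)) = ⟨m, by omega⟩ := Fin.ext (by simp)
        have hb : (⟨m + 1 + 1 - 1, by omega⟩ : Fin (d - 1)) = ⟨m + 1, by omega⟩ :=
          Fin.ext (by simp)
        rw [ha, hb]
        by_cases hcase : m + 1 < (j0 : ℕ)
        · rw [hs0 _ (by simpa using Nat.lt_of_succ_lt hcase), hs0 _ (by simpa using hcase)]
        · by_cases hcase2 : m < (j0 : ℕ)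
          · exfalso
            have h1 : t ⟨m, by omega⟩ = 0 := minIdx_min t hz _ (by simpa using hcase2)
            apply minIdx_ne t hz
            have : j0 = ⟨m + 1, by omega⟩ := Fin.ext (by simp; omega)
            rw [← hj0, this, ← htt, h1]
          · have hj0m : (j0 : ℕ) ≤ m := by omega
            have hv1 : τ (m - (j0 : ℕ)) = t ⟨m, by omega⟩ := by
              simp only [hτ]
              exact congrArg t (Fin.ext (by simp only [Fin.val_mk]; omega))
            have hv2 : τ ((m - (j0 : ℕ)) + 1) = t ⟨m + 1, by omega⟩ := by
              simp only [hτ]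
              exact congrArg t (Fin.ext (by simp only [Fin.val_mk]; omega))
            have hτeq : τ (m - (j0 : ℕ)) = τ ((m - (j0 : ℕ)) + 1) := by
              rw [hv1, hv2, htt]
            have hxx := xSeq_eq_adj (Fq := Fq) r τ hr hτpos hτmono hτeq
            rw [← hxdef] at hxx
            have hxx2 : x (m - (j0 : ℕ)) = x (m + 1 - (j0 : ℕ)) := by
              rw [hxx]; congr 1; omega
            simp only [hs]
            rw [if_neg (by omega), if_neg (by omega)]
            rw [hxx2]
    refine ⟨s, hsface, ?_⟩
    funext i
    rw [xiFun_apply_of_minIdx_eq s hsz j0 hminIdx i]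
    by_cases hi : (i : ℕ) < (j0 : ℕ)
    · rw [if_pos hi]
      exact (minIdx_min t hz i hi).symm
    · rw [if_neg hi]
      push_neg at hi
      have hrr : (j0 : ℕ) + 1 = r := rfl
      set n : ℕ := d - 1 - (j0 : ℕ) with hn
      have hsfun : (fun tt : Fin n =>
          (s ⟨(j0 : ℕ) + (tt : ℕ), by have := tt.isLt; have := j0.isLt; omega⟩) ^ r)
          = fun tt : Fin n => q ^ r * x (tt : ℕ) := by
        funext tt
        rw [hsr ⟨(j0 : ℕ) + (tt : ℕ), by have := tt.isLt; have := j0.isLt; omega⟩ (by simp)]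
        congr 1
        simp
      have harg : ((q : ℝ) ^ (1 * r))⁻¹ * s i ^ r = x ((i : ℕ) - (j0 : ℕ)) := by
        rw [one_mul, hsr i hi, ← mul_assoc, inv_mul_cancel₀ (ne_of_gt hqrpos), one_mul]
      rw [hrr, hsfun, harg]
      set m : ℕ := (i : ℕ) - (j0 : ℕ) with hm
      have hmn : m ≤ n := by omega
      have htri : epsFun Fq r n (fun tt : Fin n => q ^ r * x (tt : ℕ)) (x m)
          = epsFun Fq r m (fun j : Fin m => q ^ r * x (j : ℕ)) (x m) := by
        rw [eps_tri hr hmn _ (fun tt => mul_pos hqrpos (hxpos _)) ?_]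
        · rfl
        · intro tt htt
          calc x m ≤ x (tt : ℕ) := hxmono htt
            _ ≤ q ^ r * x (tt : ℕ) := by
                nth_rewrite 1 [← one_mul (x (tt : ℕ))]
                exact mul_le_mul_of_nonneg_right (one_le_pow₀ (by rw [hq]; exact one_le_q))
                  (hxpos _).le
      rw [htri, hxeq m]
      rw [hτ]
      simp only
      congr 1
      apply Fin.ext
      simp only [Fin.val_mk]
      omega

end St15
/-- Let `d ≥ 1`.  For every `J ⊆ {0, 1, …, d−2}` the map `ξ^d_1` maps the
face `F_J` of `C_d` onto itself: `ξ^d_1(F_J) = F_J`. -/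
theorem statement15 (Fq : Type) [Field Fq] [Fintype Fq]
    (d : ℕ) (hd : 1 ≤ d) (J : Set ℕ) (hJ : ∀ j ∈ J, j + 2 ≤ d) :
    xiFun Fq d 1 '' faceJ d J = faceJ d J := by
  apply Set.Subset.antisymm
  · rintro t ⟨s, hs, rfl⟩
    exact St15.xi_forward d hd J hJ s hs
  · intro t ht
    obtain ⟨s, hsface, hxi⟩ := St15.xi_surj (Fq := Fq) d hd J hJ t ht
    exact ⟨s, hsface, hxi⟩
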